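/- Let Y = {Y_1,…,Y_s} be a partition of H and Z = {Z_1,…,Z_t} be a partition of N, with Z_{k*} a block of Z of maximal size. If C is a social choice correspondence which is Y-anonymous, Z-neutral and immune to the reversal bias, and gcd( gcd(|Y_1|,…,|Y_s|), lcm((|Z_{k*}|)!, 2) ) = 1, then C admits a resolute refinement which is Y-anonymous, Z-neutral and immune to the reversal bias. -/

import Mathlib

/-!
Common framework: preferences on `n ≥ 2` alternatives (`Fin n`) expressed by `h ≥ 2`
individuals (`Fin h`).  Following the paper, a linear order `q ∈ L(N)` is identified with
the permutation of `Fin n` sending each rank position (`0` = best) to the alternative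
occupying that position.
-/

/-- A preference relation (a linear order on the set `Fin n` of alternatives), identified
with the permutation sending each rank position (`0` = best) to the alternative at
that position. -/
abbrev Pref (n : ℕ) := Equiv.Perm (Fin n)

/-- `x ⪰_q y` : alternative `x` is weakly preferred to `y` in `q`. -/
def prefGE {n : ℕ} (q : Pref n) (x y : Fin n) : Prop := q.symm x ≤ q.symm y

/-- `x ≻_q y` : alternative `x` is strictly preferred to `y` in `q`. -/
def prefGT {n : ℕ} (q : Pref n) (x y : Fin n) : Prop := q.symm x < q.symm y

instance {n : ℕ} (q : Pref n) (x y : Fin n) : Decidable (prefGT q x y) :=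
  inferInstanceAs (Decidable (q.symm x < q.symm y))

/-- A preference profile: one preference relation for each individual. -/
abbrev Profile (n h : ℕ) := Fin h → Pref n

/-- A social choice correspondence (the nonemptiness of its values is `IsSCC`). -/
abbrev SCC (n h : ℕ) := Profile n h → Set (Fin n)

/-- `C` has nonempty values, i.e. `C` really is a social choice correspondence. -/
def IsSCC {n h : ℕ} (C : SCC n h) : Prop := ∀ p, (C p).Nonempty

/-- `C` is resolute: it always selects exactly one alternative. -/
def Resolute {n h : ℕ} (C : SCC n h) : Prop := ∀ p, ∃ x, C p = {x}

/-- `C'` is a refinement of `C`. -/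
def Refines {n h : ℕ} (C' C : SCC n h) : Prop := ∀ p, C' p ⊆ C p

/-- The order-reversing permutation `ρ₀ : r ↦ n - r + 1`. -/
def rho0 (n : ℕ) : Equiv.Perm (Fin n) := Fin.revPerm

/-- The profile `p^{(id,id,ρ₀)}` obtained from `p` by reversing every individual
preference. -/
def revProfile {n h : ℕ} (p : Profile n h) : Profile n h := fun i => p i * rho0 n

/-- `C` is immune to the reversal bias. -/
def Immune {n h : ℕ} (C : SCC n h) : Prop :=
  ∀ (p : Profile n h) (x : Fin n), C p = {x} → C (revProfile p) ≠ C p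

/-- `Y` is a partition: nonempty, pairwise disjoint, covering blocks. -/
def IsPartition {α : Type*} {s : ℕ} (Y : Fin s → Finset α) : Prop :=
  (∀ j, (Y j).Nonempty) ∧ (∀ j k, j ≠ k → Disjoint (Y j) (Y k)) ∧ (∀ a, ∃ j, a ∈ Y j)

/-- The profile `p^{(φ,ψ,ρ)}`: individual `i` is renamed `φ(i)`, alternative `x` is
renamed `ψ(x)`, ranks are moved by `ρ`. -/
def pact {n h : ℕ} (φ : Equiv.Perm (Fin h)) (ψ ρ : Equiv.Perm (Fin n))
    (p : Profile n h) : Profile n h :=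
  fun i => ψ * p (φ⁻¹ i) * ρ

/-- Anonymity with respect to the partition `Y` of the individuals. -/
def YAnonymous {n h s : ℕ} (Y : Fin s → Finset (Fin h)) (C : SCC n h) : Prop :=
  ∀ (p : Profile n h) (φ : Equiv.Perm (Fin h)),
    (∀ j, (Y j).image φ = Y j) → C (pact φ 1 1 p) = C p

/-- Neutrality with respect to the partition `Z` of the alternatives. -/
def ZNeutral {n h t : ℕ} (Z : Fin t → Finset (Fin n)) (C : SCC n h) : Prop :=
  ∀ (p : Profile n h) (ψ : Equiv.Perm (Fin n)),
    (∀ k, (Z k).image ψ = Z k) → C (pact 1 ψ 1 p) = ψ '' C p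

/-! ### basic algebra of `pact` -/

lemma rho0_mul_self (n : ℕ) : rho0 n * rho0 n = 1 := by
  ext x
  simp [rho0]

lemma rho0_inv (n : ℕ) : (rho0 n)⁻¹ = rho0 n :=
  inv_eq_of_mul_eq_one_left (rho0_mul_self n)

lemma pact_pact {n h : ℕ} (φ' φ : Equiv.Perm (Fin h)) (ψ' ψ ρ' ρ : Equiv.Perm (Fin n))
    (p : Profile n h) :
    pact φ' ψ' ρ' (pact φ ψ ρ p) = pact (φ' * φ) (ψ' * ψ) (ρ * ρ') p := by
  funext i
  simp only [pact, mul_inv_rev, Equiv.Perm.mul_apply]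
  group

lemma pact_one {n h : ℕ} (p : Profile n h) : pact 1 1 1 p = p := by
  funext i; simp [pact]

lemma pact_inv_cancel {n h : ℕ} (φ : Equiv.Perm (Fin h)) (ψ ρ : Equiv.Perm (Fin n))
    (p : Profile n h) : pact φ⁻¹ ψ⁻¹ ρ⁻¹ (pact φ ψ ρ p) = p := by
  rw [pact_pact]; simp [pact_one]

lemma revProfile_pact {n h : ℕ} (φ : Equiv.Perm (Fin h)) (ψ : Equiv.Perm (Fin n))
    (p : Profile n h) : revProfile (pact φ ψ 1 p) = pact φ ψ 1 (revProfile p) := by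
  funext i
  simp [revProfile, pact, mul_assoc]

lemma revProfile_revProfile {n h : ℕ} (p : Profile n h) : revProfile (revProfile p) = p := by
  funext i
  simp [revProfile, mul_assoc, rho0_mul_self]

lemma revProfile_eq_pact {n h : ℕ} (p : Profile n h) : revProfile p = pact 1 1 (rho0 n) p := by
  funext i; simp [revProfile, pact]

lemma pact_fix_iff {n h : ℕ} (φ : Equiv.Perm (Fin h)) (ψ ρ : Equiv.Perm (Fin n))
    (p : Profile n h) : pact φ ψ ρ p = p ↔ ∀ j, p (φ j) = ψ * p j * ρ := by
  constructor
  · intro hp j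
    have := congrFun hp (φ j)
    simp only [pact, Equiv.Perm.inv_def, Equiv.symm_apply_apply] at this
    rw [this]
  · intro H
    funext i
    have := H (φ⁻¹ i)
    simp only [pact, Equiv.Perm.inv_def, Equiv.apply_symm_apply] at this ⊢
    rw [← this]

/-! ### invariant finsets -/

lemma image_inv_keeps {m : ℕ} (φ : Equiv.Perm (Fin m)) (S : Finset (Fin m))
    (hS : S.image ⇑φ = S) : S.image ⇑φ⁻¹ = S := by
  conv_lhs => rw [← hS]
  rw [Finset.image_image]
  have : (⇑φ⁻¹ ∘ ⇑φ) = id := by funext x; simp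
  rw [this, Finset.image_id]

lemma image_mul_keeps {m : ℕ} (φ φ' : Equiv.Perm (Fin m)) (S : Finset (Fin m))
    (hS : S.image ⇑φ = S) (hS' : S.image ⇑φ' = S) : S.image ⇑(φ * φ') = S := by
  rw [Equiv.Perm.coe_mul, ← Finset.image_image, hS', hS]

lemma image_one_keeps {m : ℕ} (S : Finset (Fin m)) : S.image ⇑(1 : Equiv.Perm (Fin m)) = S := by
  simp

lemma mem_of_image_keeps {m : ℕ} (φ : Equiv.Perm (Fin m)) (S : Finset (Fin m))
    (hS : S.image ⇑φ = S) {x : Fin m} (hx : x ∈ S) : φ x ∈ S := by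
  rw [← hS]; exact Finset.mem_image_of_mem _ hx

lemma iterate_mem_keeps {m : ℕ} (φ : Equiv.Perm (Fin m)) (S : Finset (Fin m))
    (hS : S.image ⇑φ = S) {x : Fin m} (hx : x ∈ S) (k : ℕ) : (⇑φ)^[k] x ∈ S := by
  induction k with
  | zero => simpa
  | succ k ih => rw [Function.iterate_succ_apply']; exact mem_of_image_keeps φ S hS ih

lemma perm_periodicPt {m : ℕ} (φ : Equiv.Perm (Fin m)) (x : Fin m) :
    x ∈ Function.periodicPts ⇑φ := by
  refine ⟨orderOf φ, orderOf_pos φ, ?_⟩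
  show (⇑φ)^[orderOf φ] x = x
  rw [← Equiv.Perm.coe_pow, pow_orderOf_eq_one]
  rfl

/-- The orbit of `x` under `φ`, as a finset, with card = minimal period. -/
lemma orbit_card_and_mem {m : ℕ} (φ : Equiv.Perm (Fin m)) (S : Finset (Fin m))
    (hS : S.image ⇑φ = S) {x : Fin m} (hx : x ∈ S) :
    ∃ O : Finset (Fin m), O ⊆ S ∧ O.card = Function.minimalPeriod ⇑φ x ∧ x ∈ O ∧
      O.image ⇑φ = O := by
  classical
  set c := Function.minimalPeriod ⇑φ x with hc
  have hcpos : 0 < c := Function.minimalPeriod_pos_of_mem_periodicPts (perm_periodicPt φ x)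
  refine ⟨(Finset.range c).image (fun k => (⇑φ)^[k] x), ?_, ?_, ?_, ?_⟩
  · intro y hy
    simp only [Finset.mem_image, Finset.mem_range] at hy
    obtain ⟨k, _, rfl⟩ := hy
    exact iterate_mem_keeps φ S hS hx k
  · rw [Finset.card_image_of_injOn, Finset.card_range]
    intro a ha b hb hab
    exact Function.iterate_injOn_Iio_minimalPeriod (by simpa using ha) (by simpa using hb) hab
  · exact Finset.mem_image.2 ⟨0, by simpa using hcpos, rfl⟩
  · apply Finset.eq_of_subset_of_card_le
    · intro y hy
      simp only [Finset.mem_image, Finset.mem_range] at hy ⊢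
      obtain ⟨z, ⟨k, hk, rfl⟩, rfl⟩ := hy
      rcases Nat.lt_or_ge (k+1) c with h1 | h1
      · exact ⟨k+1, h1, by rw [Function.iterate_succ_apply']⟩
      · have hkc : k.succ = c := by omega
        refine ⟨0, hcpos, ?_⟩
        simp only [Function.iterate_zero_apply]
        have h2 : (⇑φ)^[k.succ] x = x := by rw [hkc, hc]; exact Function.iterate_minimalPeriod
        rw [Function.iterate_succ_apply'] at h2
        exact h2.symm
    · rw [Finset.card_image_of_injective _ φ.injective]

/-- Orbit-counting lemma: if `d` divides the minimal period of every point of an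
invariant finset `S`, then `d` divides `S.card`. -/
lemma lemL {m : ℕ} (d : ℕ) (φ : Equiv.Perm (Fin m)) :
    ∀ (c : ℕ) (S : Finset (Fin m)), S.card ≤ c → S.image ⇑φ = S →
      (∀ i ∈ S, d ∣ Function.minimalPeriod ⇑φ i) → d ∣ S.card := by
  intro c
  induction c with
  | zero =>
    intro S hc _ _
    interval_cases h : S.card
    exact dvd_zero d
  | succ c ih =>
    intro S hc hS hd
    rcases S.eq_empty_or_nonempty with rfl | ⟨i, hi⟩
    · simp
    obtain ⟨O, hOS, hOcard, hiO, hOinv⟩ := orbit_card_and_mem φ S hS hi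
    have hOpos : 0 < O.card := Finset.card_pos.2 ⟨i, hiO⟩
    have hsplit : (S \ O).card + O.card = S.card := Finset.card_sdiff_add_card_eq_card hOS
    have hinv' : (S \ O).image ⇑φ = S \ O := by
      rw [Finset.image_sdiff _ _ φ.injective, hS, hOinv]
    have hd' : ∀ j ∈ S \ O, d ∣ Function.minimalPeriod ⇑φ j := fun j hj =>
      hd j (Finset.mem_sdiff.1 hj).1
    have hle : (S \ O).card ≤ c := by omega
    have h1 := ih (S \ O) hle hinv' hd'
    have h2 : d ∣ O.card := hOcard ▸ hd i hi
    rw [← hsplit]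
    exact Nat.dvd_add h1 h2

/-! ### key arithmetic lemmas -/

lemma keyOrd {h s : ℕ} (Y : Fin s → Finset (Fin h)) (φ : Equiv.Perm (Fin h))
    (hφ : ∀ j, (Y j).image ⇑φ = Y j) (d : ℕ)
    (hd : ∀ i, d ∣ Function.minimalPeriod ⇑φ i) :
    d ∣ Finset.univ.gcd (fun j => (Y j).card) := by
  apply Finset.dvd_gcd
  intro j _
  exact lemL d φ (Y j).card (Y j) le_rfl (hφ j) (fun i _ => hd i)

lemma psiPow {n t : ℕ} (Z : Fin t → Finset (Fin n)) (hZ : IsPartition Z) (kstar : Fin t)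
    (hks : ∀ k, (Z k).card ≤ (Z kstar).card) (ψ : Equiv.Perm (Fin n))
    (hψ : ∀ k, (Z k).image ⇑ψ = Z k) : ψ ^ (Nat.factorial (Z kstar).card) = 1 := by
  apply Equiv.ext
  intro x
  obtain ⟨k, hk⟩ := hZ.2.2 x
  obtain ⟨O, hOS, hOcard, hxO, _⟩ := orbit_card_and_mem ψ (Z k) (hψ k) hk
  set c := Function.minimalPeriod ⇑ψ x with hc
  have hcpos : 0 < c := Function.minimalPeriod_pos_of_mem_periodicPts (perm_periodicPt ψ x)
  have hcle : c ≤ (Z kstar).card := by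
    calc c = O.card := hOcard.symm
    _ ≤ (Z k).card := Finset.card_le_card hOS
    _ ≤ (Z kstar).card := hks k
  have hdvd : c ∣ Nat.factorial (Z kstar).card := Nat.dvd_factorial hcpos hcle
  have hper : Function.IsPeriodicPt ⇑ψ (Nat.factorial (Z kstar).card) x :=
    (Function.isPeriodicPt_minimalPeriod ⇑ψ x).trans_dvd hdvd
  have hx : (ψ ^ Nat.factorial (Z kstar).card) x = x := hper
  simpa using hx

lemma pow_rel {n h : ℕ} (φ : Equiv.Perm (Fin h)) (ψ ρ : Equiv.Perm (Fin n))
    (p : Profile n h) (hrel : ∀ j, p (φ j) = ψ * p j * ρ) (k : ℕ) (j : Fin h) :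
    p ((⇑φ)^[k] j) = ψ ^ k * p j * ρ ^ k := by
  induction k with
  | zero => simp
  | succ k ih =>
    rw [Function.iterate_succ_apply', hrel, ih]
    rw [pow_succ' ψ k, pow_succ ρ k]
    group

lemma psiPow_eq_one_of_cycle {n h : ℕ} (φ : Equiv.Perm (Fin h)) (ψ : Equiv.Perm (Fin n))
    (p : Profile n h) (hrel : ∀ j, p (φ j) = ψ * p j) (i : Fin h) :
    ψ ^ Function.minimalPeriod ⇑φ i = 1 := by
  have h1 : ∀ j, p (φ j) = ψ * p j * 1 := by simpa using hrel
  have h2 := pow_rel φ ψ 1 p h1 (Function.minimalPeriod ⇑φ i) i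
  rw [Function.iterate_minimalPeriod, one_pow, mul_one] at h2
  have h4 : ψ ^ Function.minimalPeriod ⇑φ i * p i = 1 * p i := by
    rw [one_mul]; exact h2.symm
  exact mul_right_cancel h4

lemma keyK1 {h n s t : ℕ}
    (Y : Fin s → Finset (Fin h))
    (Z : Fin t → Finset (Fin n)) (hZ : IsPartition Z)
    (kstar : Fin t) (hks : ∀ k, (Z k).card ≤ (Z kstar).card)
    (hgcd : Nat.gcd (Finset.univ.gcd fun j => (Y j).card)
      (Nat.lcm (Nat.factorial (Z kstar).card) 2) = 1)
    (φ : Equiv.Perm (Fin h)) (ψ : Equiv.Perm (Fin n))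
    (hφ : ∀ j, (Y j).image ⇑φ = Y j) (hψ : ∀ k, (Z k).image ⇑ψ = Z k)
    (p : Profile n h) (hp : pact φ ψ 1 p = p) : ψ = 1 := by
  have hrel : ∀ j, p (φ j) = ψ * p j := by
    have := (pact_fix_iff φ ψ 1 p).1 hp
    intro j; have := this j; rwa [mul_one] at this
  set d := orderOf ψ with hd
  have hd1 : ∀ i : Fin h, d ∣ Function.minimalPeriod ⇑φ i := fun i =>
    orderOf_dvd_of_pow_eq_one (psiPow_eq_one_of_cycle φ ψ p hrel i)
  have hdg : d ∣ Finset.univ.gcd (fun j => (Y j).card) := keyOrd Y φ hφ d hd1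
  have hdM : d ∣ Nat.lcm (Nat.factorial (Z kstar).card) 2 :=
    dvd_trans (orderOf_dvd_of_pow_eq_one (psiPow Z hZ kstar hks ψ hψ)) (Nat.dvd_lcm_left _ _)
  have : d ∣ 1 := hgcd ▸ Nat.dvd_gcd hdg hdM
  have hd1' : d = 1 := Nat.eq_one_of_dvd_one this
  exact orderOf_eq_one_iff.1 hd1'

lemma keyK2 {h n s t : ℕ}
    (Y : Fin s → Finset (Fin h)) (hY : IsPartition Y)
    (Z : Fin t → Finset (Fin n)) (hZ : IsPartition Z)
    (kstar : Fin t) (hks : ∀ k, (Z k).card ≤ (Z kstar).card)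
    (hgcd : Nat.gcd (Finset.univ.gcd fun j => (Y j).card)
      (Nat.lcm (Nat.factorial (Z kstar).card) 2) = 1)
    (φ : Equiv.Perm (Fin h)) (ψ : Equiv.Perm (Fin n))
    (hφ : ∀ j, (Y j).image ⇑φ = Y j) (hψ : ∀ k, (Z k).image ⇑ψ = Z k)
    (p : Profile n h) (hp : pact φ ψ (rho0 n) p = p) :
    ∃ r : Pref n, ψ = r * rho0 n * r⁻¹ := by
  have hrel : ∀ j, p (φ j) = ψ * p j * rho0 n := (pact_fix_iff φ ψ (rho0 n) p).1 hp
  -- the square is a stabilizer with ρ = 1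
  have hsq : pact (φ * φ) (ψ * ψ) 1 p = p := by
    rw [pact_fix_iff]
    intro j
    have h1 := hrel j
    have h2 := hrel (φ j)
    rw [h1] at h2
    simp only [Equiv.Perm.coe_mul, Function.comp_apply, mul_one]
    rw [h2]
    have : ψ * (ψ * p j * rho0 n) * rho0 n = ψ * ψ * p j * (rho0 n * rho0 n) := by group
    rw [this, rho0_mul_self, mul_one]
  have hψ2 : ψ * ψ = 1 := keyK1 Y Z hZ kstar hks hgcd (φ * φ) (ψ * ψ)
    (fun j => image_mul_keeps φ φ (Y j) (hφ j) (hφ j))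
    (fun k => image_mul_keeps ψ ψ (Z k) (hψ k) (hψ k)) p hsq
  -- the gcd of the |Y_j| is odd
  have hodd : ¬ (2 ∣ Finset.univ.gcd (fun j => (Y j).card)) := by
    intro h2
    have : (2:ℕ) ∣ 1 := hgcd ▸ Nat.dvd_gcd h2 (Nat.dvd_lcm_right _ _)
    omega
  -- φ has a cycle of odd length
  have hoddcyc : ∃ i : Fin h, ¬ (2 ∣ Function.minimalPeriod ⇑φ i) := by
    by_contra hall
    push_neg at hall
    exact hodd (keyOrd Y φ hφ 2 hall)
  obtain ⟨i, hi⟩ := hoddcyc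
  set c := Function.minimalPeriod ⇑φ i with hc
  have h2 := pow_rel φ ψ (rho0 n) p hrel c i
  rw [Function.iterate_minimalPeriod] at h2
  -- ψ^c = ψ and ρ0^c = ρ0 for odd c
  obtain ⟨e, he⟩ : ∃ e, c = 2 * e + 1 := ⟨c / 2, by omega⟩
  have hψc : ψ ^ c = ψ := by
    rw [he, pow_succ, pow_mul]
    rw [show ψ ^ 2 = 1 by rw [pow_two]; exact hψ2, one_pow, one_mul]
  have hρc : (rho0 n) ^ c = rho0 n := by
    rw [he, pow_succ, pow_mul]
    rw [show (rho0 n) ^ 2 = 1 by rw [pow_two]; exact rho0_mul_self n, one_pow, one_mul]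
  rw [hψc, hρc] at h2
  -- p i = ψ * p i * ρ0  ⇒  ψ = p i * ρ0⁻¹ * (p i)⁻¹
  have h3 : ψ * p i * rho0 n = p i := h2.symm
  have h4 : ψ * p i = p i * (rho0 n)⁻¹ := by
    calc ψ * p i = ψ * p i * rho0 n * (rho0 n)⁻¹ := by group
    _ = p i * (rho0 n)⁻¹ := by rw [h3]
  refine ⟨p i, ?_⟩
  calc ψ = ψ * p i * (p i)⁻¹ := by group
  _ = p i * (rho0 n)⁻¹ * (p i)⁻¹ := by rw [h4]
  _ = p i * rho0 n * (p i)⁻¹ := by rw [rho0_inv]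

lemma fix_rev_unique {n : ℕ} {a b : Fin n} (ha : Fin.rev a = a) (hb : Fin.rev b = b) :
    a = b := by
  have ha' := congrArg Fin.val ha
  have hb' := congrArg Fin.val hb
  rw [Fin.val_rev] at ha' hb'
  have h1 : a.val < n := a.isLt
  have h2 : b.val < n := b.isLt
  exact Fin.ext (by omega)

lemma fix_conj_unique {n : ℕ} (r : Pref n) {x y : Fin n}
    (hx : (r * rho0 n * r⁻¹) x = x) (hy : (r * rho0 n * r⁻¹) y = y) : x = y := by
  have hx' : rho0 n (r⁻¹ x) = r⁻¹ x := by
    have := congrArg (⇑r⁻¹) hx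
    simpa [Equiv.Perm.mul_apply] using this
  have hy' : rho0 n (r⁻¹ y) = r⁻¹ y := by
    have := congrArg (⇑r⁻¹) hy
    simpa [Equiv.Perm.mul_apply] using this
  have : r⁻¹ x = r⁻¹ y := fix_rev_unique (a := r⁻¹ x) (b := r⁻¹ y) hx' hy'
  simpa using congrArg (⇑r) this

/-! ### the symmetry relation on profiles -/

/-- `φ` stabilizes every block of `Y`. -/
def VY {h s : ℕ} (Y : Fin s → Finset (Fin h)) (φ : Equiv.Perm (Fin h)) : Prop :=
  ∀ j, (Y j).image ⇑φ = Y j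

/-- `ψ` stabilizes every block of `Z`. -/
def WZ {n t : ℕ} (Z : Fin t → Finset (Fin n)) (ψ : Equiv.Perm (Fin n)) : Prop :=
  ∀ k, (Z k).image ⇑ψ = Z k

/-- `q` is obtained from `p` by an admissible pair `(φ, ψ)` (with trivial `ρ`). -/
def GRel {n h s t : ℕ} (Y : Fin s → Finset (Fin h)) (Z : Fin t → Finset (Fin n))
    (p q : Profile n h) : Prop :=
  ∃ ψ, WZ Z ψ ∧ ∃ φ, VY Y φ ∧ q = pact φ ψ 1 p

/-- `q` is obtained from `p` by an admissible triple `(φ, ψ, ρ)`. -/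
def URel {n h s t : ℕ} (Y : Fin s → Finset (Fin h)) (Z : Fin t → Finset (Fin n))
    (p q : Profile n h) : Prop :=
  GRel Y Z p q ∨ GRel Y Z (revProfile p) q

section Rel
variable {n h s t : ℕ} (Y : Fin s → Finset (Fin h)) (Z : Fin t → Finset (Fin n))

lemma VY_one : VY Y 1 := fun j => by simp [VY]
lemma WZ_one : WZ Z 1 := fun k => by simp [WZ]
lemma VY_mul {φ φ'} (h1 : VY Y φ) (h2 : VY Y φ') : VY Y (φ * φ') :=
  fun j => image_mul_keeps φ φ' (Y j) (h1 j) (h2 j)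
lemma WZ_mul {ψ ψ'} (h1 : WZ Z ψ) (h2 : WZ Z ψ') : WZ Z (ψ * ψ') :=
  fun k => image_mul_keeps ψ ψ' (Z k) (h1 k) (h2 k)
lemma VY_inv {φ} (h1 : VY Y φ) : VY Y φ⁻¹ := fun j => image_inv_keeps φ (Y j) (h1 j)
lemma WZ_inv {ψ} (h1 : WZ Z ψ) : WZ Z ψ⁻¹ := fun k => image_inv_keeps ψ (Z k) (h1 k)

lemma GRel_refl (p : Profile n h) : GRel Y Z p p :=
  ⟨1, WZ_one Z, 1, VY_one Y, (pact_one p).symm⟩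

lemma GRel_symm {p q : Profile n h} (hpq : GRel Y Z p q) : GRel Y Z q p := by
  obtain ⟨ψ, hψ, φ, hφ, rfl⟩ := hpq
  exact ⟨ψ⁻¹, WZ_inv Z hψ, φ⁻¹, VY_inv Y hφ, by
    rw [show ((1:Equiv.Perm (Fin n))) = (1:Equiv.Perm (Fin n))⁻¹ from rfl]
    exact (pact_inv_cancel φ ψ 1 p).symm⟩

lemma GRel_trans {p q r : Profile n h} (hpq : GRel Y Z p q) (hqr : GRel Y Z q r) :
    GRel Y Z p r := by
  obtain ⟨ψ, hψ, φ, hφ, rfl⟩ := hpq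
  obtain ⟨ψ', hψ', φ', hφ', rfl⟩ := hqr
  exact ⟨ψ' * ψ, WZ_mul Z hψ' hψ, φ' * φ, VY_mul Y hφ' hφ, by
    rw [pact_pact, one_mul]⟩

lemma GRel_rev {p q : Profile n h} (hpq : GRel Y Z p q) :
    GRel Y Z (revProfile p) (revProfile q) := by
  obtain ⟨ψ, hψ, φ, hφ, rfl⟩ := hpq
  exact ⟨ψ, hψ, φ, hφ, (revProfile_pact φ ψ p)⟩

lemma URel_refl (p : Profile n h) : URel Y Z p p := Or.inl (GRel_refl Y Z p)

lemma URel_symm {p q : Profile n h} (hpq : URel Y Z p q) : URel Y Z q p := by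
  rcases hpq with hg | hg
  · exact Or.inl (GRel_symm Y Z hg)
  · have := GRel_rev Y Z (GRel_symm Y Z hg)
    rw [revProfile_revProfile] at this
    exact Or.inr this

lemma URel_trans {p q r : Profile n h} (hpq : URel Y Z p q) (hqr : URel Y Z q r) :
    URel Y Z p r := by
  rcases hpq with h1 | h1 <;> rcases hqr with h2 | h2
  · exact Or.inl (GRel_trans Y Z h1 h2)
  · exact Or.inr (GRel_trans Y Z (GRel_rev Y Z h1) h2)
  · exact Or.inr (GRel_trans Y Z h1 h2)
  · have h1' := GRel_rev Y Z h1
    rw [revProfile_revProfile] at h1'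
    exact Or.inl (GRel_trans Y Z h1' h2)

/-- The setoid of `URel`. -/
def uSetoid : Setoid (Profile n h) :=
  ⟨URel Y Z, URel_refl Y Z, fun {_ _} => URel_symm Y Z, fun {_ _ _} => URel_trans Y Z⟩

/-- A choice of representatives for `URel`-classes. -/
noncomputable def repU (p : Profile n h) : Profile n h :=
  (Quotient.mk (uSetoid Y Z) p).out

lemma repU_rel (p : Profile n h) : URel Y Z (repU Y Z p) p :=
  Quotient.exact (Quotient.out_eq (Quotient.mk (uSetoid Y Z) p))

lemma repU_eq_of_rel {p q : Profile n h} (hpq : URel Y Z p q) : repU Y Z p = repU Y Z q := by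
  unfold repU
  rw [Quotient.sound (s := uSetoid Y Z) hpq]

/-- uniqueness of the `ψ`-component, given triviality of stabilizer `ψ`-parts. -/
lemma psi_unique {kstar : Fin t}
    (hZ : IsPartition Z) (hks : ∀ k, (Z k).card ≤ (Z kstar).card)
    (hgcd : Nat.gcd (Finset.univ.gcd fun j => (Y j).card)
      (Nat.lcm (Nat.factorial (Z kstar).card) 2) = 1)
    {a q : Profile n h} {ψ ψ' : Equiv.Perm (Fin n)} {φ φ' : Equiv.Perm (Fin h)}
    (hψ : WZ Z ψ) (hψ' : WZ Z ψ') (hφ : VY Y φ) (hφ' : VY Y φ')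
    (e1 : q = pact φ ψ 1 a) (e2 : q = pact φ' ψ' 1 a) : ψ = ψ' := by
  have : pact (φ'⁻¹ * φ) (ψ'⁻¹ * ψ) 1 a = a := by
    have h3 : pact φ'⁻¹ ψ'⁻¹ 1 (pact φ ψ 1 a) = pact φ'⁻¹ ψ'⁻¹ 1 (pact φ' ψ' 1 a) := by
      rw [← e1, ← e2]
    rw [pact_pact, pact_pact] at h3
    simpa [pact_one] using h3
  have := keyK1 Y Z hZ kstar hks hgcd (φ'⁻¹ * φ) (ψ'⁻¹ * ψ)
    (VY_mul Y (VY_inv Y hφ') hφ) (WZ_mul Z (WZ_inv Z hψ') hψ) a this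
  have h4 : ψ' * (ψ'⁻¹ * ψ) = ψ' * 1 := by rw [this]
  simpa using h4

end Rel

section Rel2
variable {n h s t : ℕ} (Y : Fin s → Finset (Fin h)) (Z : Fin t → Finset (Fin n))

lemma GRel_comp_left {a q : Profile n h} {φ : Equiv.Perm (Fin h)} {ψ : Equiv.Perm (Fin n)}
    (hφ : VY Y φ) (hψ : WZ Z ψ) (hg : GRel Y Z a q) : GRel Y Z a (pact φ ψ 1 q) := by
  obtain ⟨ψc, hψc, φc, hφc, rfl⟩ := hg
  exact ⟨ψ * ψc, WZ_mul Z hψ hψc, φ * φc, VY_mul Y hφ hφc, by rw [pact_pact, mul_one]⟩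

lemma GRel_comp_left_iff {a q : Profile n h} {φ : Equiv.Perm (Fin h)} {ψ : Equiv.Perm (Fin n)}
    (hφ : VY Y φ) (hψ : WZ Z ψ) : GRel Y Z a (pact φ ψ 1 q) ↔ GRel Y Z a q := by
  constructor
  · intro hg
    have h2 := GRel_comp_left Y Z (VY_inv Y hφ) (WZ_inv Z hψ) hg
    rw [pact_pact] at h2
    simpa [pact_one] using h2
  · exact GRel_comp_left Y Z hφ hψ

end Rel2


/-- Theorem `super-super`(ii): if `C` is a `Y`-anonymous, `Z`-neutral scc
immune to the reversal bias and `gcd(gcd(|Y_1|,…,|Y_s|), lcm((|Z_{k*}|)!, 2)) = 1`, then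
`C` admits a resolute refinement which is `Y`-anonymous, `Z`-neutral and immune to the
reversal bias. -/
theorem statement3 {h n s t : ℕ} (hh : 2 ≤ h) (hn : 2 ≤ n)
    (Y : Fin s → Finset (Fin h)) (hY : IsPartition Y)
    (Z : Fin t → Finset (Fin n)) (hZ : IsPartition Z)
    (kstar : Fin t) (hks : ∀ k, (Z k).card ≤ (Z kstar).card)
    (C : SCC n h) (hC : IsSCC C) (hanon : YAnonymous Y C) (hneut : ZNeutral Z C)
    (himm : Immune C)
    (hgcd : Nat.gcd (Finset.univ.gcd fun j => (Y j).card)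
      (Nat.lcm (Nat.factorial (Z kstar).card) 2) = 1) :
    ∃ f : SCC n h, Resolute f ∧ Refines f C ∧ YAnonymous Y f ∧ ZNeutral Z f ∧
      Immune f := by
  classical
  -- equivariance of C under admissible pairs
  have hCeq : ∀ (p : Profile n h) (φ : Equiv.Perm (Fin h)) (ψ : Equiv.Perm (Fin n)),
      VY Y φ → WZ Z ψ → C (pact φ ψ 1 p) = ψ '' C p := by
    intro p φ ψ hφ hψ
    have hsplit : pact φ ψ 1 p = pact 1 ψ 1 (pact φ 1 1 p) := by
      rw [pact_pact]; simp only [one_mul, mul_one]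
    rw [hsplit, hneut _ ψ hψ, hanon _ φ hφ]
  -- the generic pair of distinct choices for paired orbits
  have exA : ∀ q : Profile n h, ∃ v : Fin n × Fin n,
      v.1 ∈ C q ∧ v.2 ∈ C (revProfile q) ∧ v.1 ≠ v.2 := by
    intro q
    obtain ⟨a, ha⟩ := hC q
    obtain ⟨b, hb⟩ := hC (revProfile q)
    by_cases hex : ∃ x' ∈ C (revProfile q), x' ≠ a
    · obtain ⟨x', hx', hne⟩ := hex
      exact ⟨(a, x'), ha, hx', fun e => hne e.symm⟩
    · push_neg at hex
      have hrq : C (revProfile q) = {a} := by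
        apply Set.eq_singleton_iff_unique_mem.2
        exact ⟨(hex b hb) ▸ hb, fun y hy => hex y hy⟩
      by_cases hex2 : ∃ x ∈ C q, x ≠ a
      · obtain ⟨x, hx, hne⟩ := hex2
        exact ⟨(x, a), hx, by rw [hrq]; rfl, hne⟩
      · push_neg at hex2
        have hq : C q = {a} := Set.eq_singleton_iff_unique_mem.2 ⟨ha, hex2⟩
        exact absurd (hrq.trans hq.symm) (himm q a hq)
  choose pairF hp1 hp2 hp3 using exA
  -- the choice for self-paired orbits
  have exB : ∀ q : Profile n h, GRel Y Z q (revProfile q) → ∃ x, x ∈ C q ∧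
      ∀ ψ, WZ Z ψ → (∃ φ, VY Y φ ∧ revProfile q = pact φ ψ 1 q) → ψ x ≠ x := by
    intro q hB
    obtain ⟨ψ0, hψ0, φ0, hφ0, he0⟩ := hB
    have hfix : pact φ0 ψ0 (rho0 n) q = q := by
      have h1 : pact 1 1 (rho0 n) (pact φ0 ψ0 1 q) = pact 1 1 (rho0 n) (revProfile q) := by
        rw [← he0]
      rw [pact_pact] at h1
      simp only [one_mul, mul_one] at h1
      rw [← revProfile_eq_pact, revProfile_revProfile] at h1
      exact h1
    obtain ⟨r, hr⟩ := keyK2 Y hY Z hZ kstar hks hgcd φ0 ψ0 hφ0 hψ0 q hfix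
    have hxex : ∃ x ∈ C q, ψ0 x ≠ x := by
      by_contra hall
      push_neg at hall
      obtain ⟨a, ha⟩ := hC q
      by_cases h2 : ∃ b ∈ C q, b ≠ a
      · obtain ⟨b, hb, hne⟩ := h2
        have hfa : (r * rho0 n * r⁻¹) a = a := by rw [← hr]; exact hall a ha
        have hfb : (r * rho0 n * r⁻¹) b = b := by rw [← hr]; exact hall b hb
        exact hne (fix_conj_unique r hfb hfa)
      · push_neg at h2
        have hq : C q = {a} := Set.eq_singleton_iff_unique_mem.2 ⟨ha, h2⟩
        have h3 : C (revProfile q) = C q := by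
          rw [he0, hCeq q φ0 ψ0 hφ0 hψ0, hq, Set.image_singleton, hall a ha, ← hq]
        exact himm q a hq h3
    obtain ⟨x, hx, hnx⟩ := hxex
    refine ⟨x, hx, ?_⟩
    rintro ψ hψ ⟨φ, hφ, he⟩
    have hee : ψ = ψ0 := psi_unique Y Z hZ hks hgcd hψ hψ0 hφ hφ0 he he0
    rw [hee]; exact hnx
  -- a single selection function covering both cases
  have exX : ∀ q : Profile n h, ∃ x : Fin n, x ∈ C q ∧
      (∀ ψ, WZ Z ψ → (∃ φ, VY Y φ ∧ revProfile q = pact φ ψ 1 q) → ψ x ≠ x) ∧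
      (¬ GRel Y Z q (revProfile q) → x ≠ (pairF q).2) := by
    intro q
    by_cases hB : GRel Y Z q (revProfile q)
    · obtain ⟨x, hx, hprop⟩ := exB q hB
      exact ⟨x, hx, hprop, fun hn => absurd hB hn⟩
    · refine ⟨(pairF q).1, hp1 q, ?_, fun _ => hp3 q⟩
      rintro ψ hψ ⟨φ, hφ, he⟩
      exact absurd ⟨ψ, hψ, φ, hφ, he⟩ hB
  choose xb hxbC hxbB hxbA using exX
  -- witnesses connecting each profile to its representative
  have exW : ∀ p : Profile n h, ∃ ψ, WZ Z ψ ∧ ∃ φ, VY Y φ ∧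
      ((GRel Y Z (repU Y Z p) p ∧ p = pact φ ψ 1 (repU Y Z p)) ∨
       (¬ GRel Y Z (repU Y Z p) p ∧ p = pact φ ψ 1 (revProfile (repU Y Z p)))) := by
    intro p
    by_cases hg : GRel Y Z (repU Y Z p) p
    · obtain ⟨ψ, hψ, φ, hφ, he⟩ := hg
      exact ⟨ψ, hψ, φ, hφ, Or.inl ⟨⟨ψ, hψ, φ, hφ, he⟩, he⟩⟩
    · have hr := (repU_rel Y Z p).resolve_left hg
      obtain ⟨ψ, hψ, φ, hφ, he⟩ := hr
      exact ⟨ψ, hψ, φ, hφ, Or.inr ⟨hg, he⟩⟩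
  choose ψw hψw φw hφw hw using exW
  -- the resolute refinement
  set f : SCC n h := fun p =>
    {ψw p (if GRel Y Z (repU Y Z p) p then xb (repU Y Z p)
           else (pairF (repU Y Z p)).2)} with hf
  -- value characterizations
  have hfval1 : ∀ (p : Profile n h) (ψ : Equiv.Perm (Fin n)) (φ : Equiv.Perm (Fin h)),
      WZ Z ψ → VY Y φ → GRel Y Z (repU Y Z p) p → p = pact φ ψ 1 (repU Y Z p) →
      f p = {ψ (xb (repU Y Z p))} := by
    intro p ψ φ hψ hφ hg he
    rcases hw p with ⟨_, he'⟩ | ⟨hg', _⟩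
    · have hu : ψw p = ψ := psi_unique Y Z hZ hks hgcd (hψw p) hψ (hφw p) hφ he' he
      simp only [hf]
      rw [if_pos hg, hu]
    · exact absurd hg hg'
  have hfval2 : ∀ (p : Profile n h) (ψ : Equiv.Perm (Fin n)) (φ : Equiv.Perm (Fin h)),
      WZ Z ψ → VY Y φ → ¬ GRel Y Z (repU Y Z p) p →
      p = pact φ ψ 1 (revProfile (repU Y Z p)) →
      f p = {ψ (pairF (repU Y Z p)).2} := by
    intro p ψ φ hψ hφ hg he
    rcases hw p with ⟨hg', _⟩ | ⟨_, he'⟩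
    · exact absurd hg' hg
    · have hu : ψw p = ψ := psi_unique Y Z hZ hks hgcd (hψw p) hψ (hφw p) hφ he' he
      simp only [hf]
      rw [if_neg hg, hu]
  refine ⟨f, ?_, ?_, ?_, ?_, ?_⟩
  -- Resolute
  · intro p
    exact ⟨_, rfl⟩
  -- Refines
  · intro p x hx
    by_cases hg : GRel Y Z (repU Y Z p) p
    · have hg0 := hg
      obtain ⟨ψ, hψ, φ, hφ, he⟩ := hg0
      rw [hfval1 p ψ φ hψ hφ hg he, Set.mem_singleton_iff] at hx
      subst hx
      have hCp : C p = ⇑ψ '' C (repU Y Z p) := by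
        rw [← hCeq _ φ ψ hφ hψ, ← he]
      rw [hCp]
      exact ⟨xb (repU Y Z p), hxbC (repU Y Z p), rfl⟩
    · have hr := (repU_rel Y Z p).resolve_left hg
      have hr0 := hr
      obtain ⟨ψ, hψ, φ, hφ, he⟩ := hr0
      rw [hfval2 p ψ φ hψ hφ hg he, Set.mem_singleton_iff] at hx
      subst hx
      have hCp : C p = ⇑ψ '' C (revProfile (repU Y Z p)) := by
        rw [← hCeq _ φ ψ hφ hψ, ← he]
      rw [hCp]
      exact ⟨(pairF (repU Y Z p)).2, hp2 (repU Y Z p), rfl⟩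
  -- YAnonymous
  · intro p φ hφ'
    have hφ'' : VY Y φ := hφ'
    have hUpp' : URel Y Z p (pact φ 1 1 p) :=
      Or.inl ⟨1, WZ_one Z, φ, hφ'', rfl⟩
    have hpb' : repU Y Z (pact φ 1 1 p) = repU Y Z p := (repU_eq_of_rel Y Z hUpp').symm
    by_cases hg : GRel Y Z (repU Y Z p) p
    · have hg0 := hg
      obtain ⟨ψg, hψg, φg, hφg, he⟩ := hg0
      have he' : pact φ 1 1 p = pact (φ * φg) ψg 1 (repU Y Z p) := by
        conv_lhs => rw [he]
        rw [pact_pact]; simp only [one_mul, mul_one]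
      have hg' : GRel Y Z (repU Y Z (pact φ 1 1 p)) (pact φ 1 1 p) := by
        rw [hpb']; exact ⟨ψg, hψg, φ * φg, VY_mul Y hφ'' hφg, he'⟩
      rw [hfval1 (pact φ 1 1 p) ψg (φ * φg) hψg (VY_mul Y hφ'' hφg) hg'
          (by rw [hpb']; exact he'),
        hfval1 p ψg φg hψg hφg hg he, hpb']
    · have hg' : ¬ GRel Y Z (repU Y Z (pact φ 1 1 p)) (pact φ 1 1 p) := by
        rw [hpb']
        intro hcon
        exact hg ((GRel_comp_left_iff Y Z hφ'' (WZ_one Z)).1 hcon)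
      have hr := (repU_rel Y Z p).resolve_left hg
      have hr0 := hr
      obtain ⟨ψe, hψe, φe, hφe, he⟩ := hr0
      have he' : pact φ 1 1 p = pact (φ * φe) ψe 1 (revProfile (repU Y Z p)) := by
        conv_lhs => rw [he]
        rw [pact_pact]; simp only [one_mul, mul_one]
      rw [hfval2 (pact φ 1 1 p) ψe (φ * φe) hψe (VY_mul Y hφ'' hφe) hg'
          (by rw [hpb']; exact he'),
        hfval2 p ψe φe hψe hφe hg he, hpb']
  -- ZNeutral
  · intro p ψ hψ'
    have hψ'' : WZ Z ψ := hψ'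
    have hUpp' : URel Y Z p (pact 1 ψ 1 p) :=
      Or.inl ⟨ψ, hψ'', 1, VY_one Y, rfl⟩
    have hpb' : repU Y Z (pact 1 ψ 1 p) = repU Y Z p := (repU_eq_of_rel Y Z hUpp').symm
    by_cases hg : GRel Y Z (repU Y Z p) p
    · have hg0 := hg
      obtain ⟨ψg, hψg, φg, hφg, he⟩ := hg0
      have he' : pact 1 ψ 1 p = pact φg (ψ * ψg) 1 (repU Y Z p) := by
        conv_lhs => rw [he]
        rw [pact_pact]; simp only [one_mul, mul_one]
      have hg' : GRel Y Z (repU Y Z (pact 1 ψ 1 p)) (pact 1 ψ 1 p) := by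
        rw [hpb']; exact ⟨ψ * ψg, WZ_mul Z hψ'' hψg, φg, hφg, he'⟩
      rw [hfval1 (pact 1 ψ 1 p) (ψ * ψg) φg (WZ_mul Z hψ'' hψg) hφg hg'
          (by rw [hpb']; exact he'),
        hfval1 p ψg φg hψg hφg hg he, hpb', Set.image_singleton]
      simp [Equiv.Perm.mul_apply]
    · have hg' : ¬ GRel Y Z (repU Y Z (pact 1 ψ 1 p)) (pact 1 ψ 1 p) := by
        rw [hpb']
        intro hcon
        exact hg ((GRel_comp_left_iff Y Z (VY_one Y) hψ'').1 hcon)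
      have hr := (repU_rel Y Z p).resolve_left hg
      have hr0 := hr
      obtain ⟨ψe, hψe, φe, hφe, he⟩ := hr0
      have he' : pact 1 ψ 1 p = pact φe (ψ * ψe) 1 (revProfile (repU Y Z p)) := by
        conv_lhs => rw [he]
        rw [pact_pact]; simp only [one_mul, mul_one]
      rw [hfval2 (pact 1 ψ 1 p) (ψ * ψe) φe (WZ_mul Z hψ'' hψe) hφe hg'
          (by rw [hpb']; exact he'),
        hfval2 p ψe φe hψe hφe hg he, hpb', Set.image_singleton]
      simp [Equiv.Perm.mul_apply]
  -- Immune
  · intro p x _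
    have hpbr : repU Y Z (revProfile p) = repU Y Z p :=
      (repU_eq_of_rel Y Z (Or.inr (GRel_refl Y Z (revProfile p)))).symm
    by_cases hg : GRel Y Z (repU Y Z p) p
    · have hg0 := hg
      obtain ⟨ψg, hψg, φg, hφg, he⟩ := hg0
      by_cases hg' : GRel Y Z (repU Y Z p) (revProfile p)
      · -- self-paired orbit
        have hg'0 := hg'
        obtain ⟨ψ', hψ', φ', hφ', he'⟩ := hg'0
        have h1 : repU Y Z p = pact φg⁻¹ ψg⁻¹ 1 p := by
          have hcan := pact_inv_cancel φg ψg 1 (repU Y Z p)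
          rw [inv_one] at hcan
          rw [← he] at hcan
          exact hcan.symm
        have hrevrel : revProfile (repU Y Z p) = pact (φg⁻¹ * φ') (ψg⁻¹ * ψ') 1 (repU Y Z p) := by
          conv_lhs => rw [h1, revProfile_pact, he']
          rw [pact_pact]
          simp only [mul_one]
        have hne := hxbB (repU Y Z p) (ψg⁻¹ * ψ')
          (WZ_mul Z (WZ_inv Z hψg) hψ')
          ⟨φg⁻¹ * φ', VY_mul Y (VY_inv Y hφg) hφ', hrevrel⟩
        rw [hfval1 (revProfile p) ψ' φ' hψ' hφ' (by rw [hpbr]; exact hg')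
            (by rw [hpbr]; exact he'),
          hfval1 p ψg φg hψg hφg hg he, hpbr]
        intro hcon
        have heq : ψ' (xb (repU Y Z p)) = ψg (xb (repU Y Z p)) :=
          Set.singleton_eq_singleton_iff.1 hcon
        apply hne
        rw [Equiv.Perm.mul_apply, heq]
        simp
      · -- paired orbits, p on the "plain" side
        have hrevp : revProfile p = pact φg ψg 1 (revProfile (repU Y Z p)) := by
          conv_lhs => rw [he, revProfile_pact]
        have hnB : ¬ GRel Y Z (repU Y Z p) (revProfile (repU Y Z p)) := by
          intro hB
          exact hg' (GRel_trans Y Z hB ⟨ψg, hψg, φg, hφg, hrevp⟩)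
        have hnotg : ¬ GRel Y Z (repU Y Z (revProfile p)) (revProfile p) := by
          rw [hpbr]; exact hg'
        rw [hfval2 (revProfile p) ψg φg hψg hφg hnotg (by rw [hpbr]; exact hrevp),
          hfval1 p ψg φg hψg hφg hg he, hpbr]
        intro hcon
        have heq := Set.singleton_eq_singleton_iff.1 hcon
        exact (hxbA (repU Y Z p) hnB) (ψg.injective heq).symm
    · -- paired orbits, p on the "reversed" side
      have hr := (repU_rel Y Z p).resolve_left hg
      have hr0 := hr
      obtain ⟨ψe, hψe, φe, hφe, he⟩ := hr0
      have hrevp : revProfile p = pact φe ψe 1 (repU Y Z p) := by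
        conv_lhs => rw [he, revProfile_pact, revProfile_revProfile]
      have hgrev : GRel Y Z (repU Y Z (revProfile p)) (revProfile p) := by
        rw [hpbr]; exact ⟨ψe, hψe, φe, hφe, hrevp⟩
      have hnB : ¬ GRel Y Z (repU Y Z p) (revProfile (repU Y Z p)) := by
        intro hB
        exact hg (GRel_trans Y Z hB ⟨ψe, hψe, φe, hφe, he⟩)
      rw [hfval1 (revProfile p) ψe φe hψe hφe hgrev (by rw [hpbr]; exact hrevp),
        hfval2 p ψe φe hψe hφe hg he, hpbr]
      intro hcon
      have heq := Set.singleton_eq_singleton_iff.1 hcon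
      exact (hxbA (repU Y Z p) hnB) (ψe.injective heq)
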